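/- With Z₀ = ∏_n 𝒜_n and the relation ℛ on finite sequences defined by s ℛ t iff |s| = |t| and (N_s × N_t) meets ⋃_{n>0} Gr(f_n) (graphs taken in Z₀), letting ℰ be the generated equivalence relation: for every p, the set ∏_{n<p} 𝒜_n of sequences of length p is exactly one ℰ-equivalence class, namely ℰ(1^p). -/

import Mathlib

noncomputable def Nmap (s : List ℕ) : ℕ :=
  if s = [] then 0
  else ∏ i ∈ Finset.range s.length, (Nat.nth Nat.Prime i) ^ (s.getD i 0 + 1)

noncomputable def Aset : ℕ → Set ℕ
  | 0 => {1}
  | n + 1 => {1} ∪ {m | ∃ s : List ℕ, s.length = n + 1 ∧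
      (∀ i, (hi : i < n + 1) → s.getD i 0 ∈ Aset i) ∧ m = Nmap (s ++ [1])}

/-- `f n` changes the `n`-th coordinate of `α` from `1` to `N(α↾n ⌢ 1)`. -/
noncomputable def fmap (n : ℕ) (α : ℕ → ℕ) : ℕ → ℕ :=
  Function.update α n (Nmap (List.ofFn (fun i : Fin n => α i) ++ [1]))

/-- `s ℛ t` iff `|s| = |t|` and the basic clopen rectangle `N_s × N_t` of
`Z₀ × Z₀` meets `⋃_{n>0} Gr(f_n)`, the graphs being taken in `Z₀`. -/
def Rrel (s t : List ℕ) : Prop :=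
  s.length = t.length ∧ ∃ α β : ℕ → ℕ,
    (∀ k, α k ∈ Aset k) ∧ (∀ k, β k ∈ Aset k) ∧
    (∀ i < s.length, α i = s.getD i 0) ∧ (∀ i < t.length, β i = t.getD i 0) ∧
    ∃ n, 0 < n ∧ α n = 1 ∧ β = fmap n α

/-! ### getD helpers -/

lemma getD_set_self (l : List ℕ) (k : ℕ) (hk : k < l.length) (v : ℕ) :
    (l.set k v).getD k 0 = v := by
  simp [List.getD_eq_getElem?_getD, List.getElem?_set, hk]

lemma getD_set_ne (l : List ℕ) (k i : ℕ) (h : i ≠ k) (v : ℕ) :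
    (l.set k v).getD i 0 = l.getD i 0 := by
  simp [List.getD_eq_getElem?_getD, List.getElem?_set, Ne.symm h]

lemma getD_ofFn (n : ℕ) (f : Fin n → ℕ) (i : ℕ) (hi : i < n) :
    (List.ofFn f).getD i 0 = f ⟨i, hi⟩ := by
  simp [List.getD_eq_getElem?_getD, List.getElem?_ofFn, hi]

lemma getD_take (l : List ℕ) (k i : ℕ) (hi : i < k) :
    (l.take k).getD i 0 = l.getD i 0 := by
  simp [List.getD_eq_getElem?_getD, List.getElem?_take, hi]

lemma getD_append_left (u v : List ℕ) (i : ℕ) (hi : i < u.length) :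
    ((u ++ v)).getD i 0 = u.getD i 0 := by
  simp [List.getD_eq_getElem?_getD, List.getElem?_append, hi]

lemma getD_append_right (u v : List ℕ) (i : ℕ) (hi : u.length ≤ i) :
    ((u ++ v)).getD i 0 = v.getD (i - u.length) 0 := by
  simp [List.getD_eq_getElem?_getD, List.getElem?_append_right, hi]

lemma getD_eq_getElem (l : List ℕ) (i : ℕ) (hi : i < l.length) :
    l.getD i 0 = l[i] := by
  simp [List.getD_eq_getElem?_getD, List.getElem?_eq_getElem, hi]

/-! ### Aset basics -/

lemma mem_Aset_zero {m : ℕ} : m ∈ Aset 0 ↔ m = 1 := by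
  simp [Aset]

lemma mem_Aset_succ {n m : ℕ} : m ∈ Aset (n + 1) ↔ m = 1 ∨ ∃ s : List ℕ,
    s.length = n + 1 ∧ (∀ i, i < n + 1 → s.getD i 0 ∈ Aset i) ∧ m = Nmap (s ++ [1]) := by
  rw [Aset]
  simp [Set.mem_union, Set.mem_setOf_eq]

lemma one_mem_Aset (n : ℕ) : (1 : ℕ) ∈ Aset n := by
  cases n with
  | zero => exact mem_Aset_zero.mpr rfl
  | succ m => exact mem_Aset_succ.mpr (Or.inl rfl)

/-- extension of a list by 1's -/
def extend1 (s : List ℕ) : ℕ → ℕ := fun i => if i < s.length then s.getD i 0 else 1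

lemma extend1_valid (s : List ℕ) (hs : ∀ i < s.length, s.getD i 0 ∈ Aset i) :
    ∀ k, extend1 s k ∈ Aset k := by
  intro k
  by_cases hk : k < s.length
  · simpa [extend1, hk] using hs k hk
  · simpa [extend1, hk] using one_mem_Aset k

/-- the basic one-step relation: change a 1 at position k (k>0) into N(s↾k ⌢ 1). -/
lemma rrel_step (s : List ℕ) (hs : ∀ i < s.length, s.getD i 0 ∈ Aset i)
    (k : ℕ) (hk0 : 0 < k) (hk : k < s.length) (h1 : s.getD k 0 = 1) :
    Rrel s (s.set k (Nmap (s.take k ++ [1]))) := by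
  obtain ⟨m, rfl⟩ : ∃ m, k = m + 1 := ⟨k - 1, by omega⟩
  set k := m + 1
  have hV : True := trivial
  let V : ℕ := Nmap (s.take k ++ [1])
  let α : ℕ → ℕ := extend1 s
  have hα : α = extend1 s := rfl
  have hofFn : List.ofFn (fun i : Fin k => α i) = s.take k := by
    apply List.ext_getElem
    · simp [Nat.le_of_lt hk]; rfl
    · intro i h1i h2i
      have hik : i < k := by
        have : i ≤ m := by simpa using h1i
        exact Nat.lt_succ_of_le this
      have hisl : i < s.length := lt_trans hik hk
      rw [List.getElem_ofFn]
      have : (s.take k)[i] = (s.take k).getD i 0 := (getD_eq_getElem _ _ _).symm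
      rw [this, getD_take _ _ _ hik]
      simp [hα, extend1, hisl]
  have hβval : fmap k α k = Nmap (s.take k ++ [1]) := by
    rw [fmap, Function.update_self, hofFn]
  refine ⟨by simp, α, fmap k α, extend1_valid s hs, ?_, ?_, ?_, k, hk0, ?_, rfl⟩
  · intro j
    rcases eq_or_ne j k with rfl | hj
    · rw [hβval]
      refine mem_Aset_succ.mpr (Or.inr ⟨s.take k, by simp [Nat.le_of_lt hk]; rfl, ?_, rfl⟩)
      intro i hi
      rw [getD_take _ _ _ hi]
      exact hs i (lt_trans hi hk)
    · rw [fmap, Function.update_of_ne hj]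
      exact extend1_valid s hs j
  · intro i hi; simp [hα, extend1, hi]
  · intro i hi
    rw [List.length_set] at hi
    rcases eq_or_ne i k with rfl | hik
    · rw [hβval, getD_set_self _ _ hk]
    · rw [fmap, Function.update_of_ne hik, getD_set_ne _ _ _ hik]
      simp [hα, extend1, hi]
  · show extend1 s k = 1
    rw [extend1]
    simp only [hk, if_true]
    exact h1

lemma rrel_info {s t : List ℕ} (h : Rrel s t) :
    s.length = t.length ∧ (∀ i < s.length, s.getD i 0 ∈ Aset i) ∧
      (∀ i < t.length, t.getD i 0 ∈ Aset i) := by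
  obtain ⟨hlen, α, β, hα, hβ, hαs, hβt, -⟩ := h
  exact ⟨hlen, fun i hi => (hαs i hi) ▸ hα i, fun i hi => (hβt i hi) ▸ hβ i⟩

/-- key lemma: two valid sequences agreeing from position k on are equivalent -/
lemma Ckey : ∀ k (s t : List ℕ), s.length = t.length →
    (∀ i < s.length, s.getD i 0 ∈ Aset i) → (∀ i < t.length, t.getD i 0 ∈ Aset i) →
    (∀ i, k ≤ i → i < s.length → s.getD i 0 = t.getD i 0) →
    Relation.EqvGen Rrel s t := by
  intro k
  induction k with
  | zero =>
    intro s t hlen _ _ hagree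
    have : s = t := by
      apply List.ext_getElem hlen
      intro i h1i h2i
      rw [← getD_eq_getElem s i h1i, ← getD_eq_getElem t i h2i]
      exact hagree i (Nat.zero_le i) h1i
    exact this ▸ Relation.EqvGen.refl s
  | succ k ih =>
    intro s t hlen hsval htval hagree
    by_cases hkp : k < s.length
    swap
    · exact ih s t hlen hsval htval
        (fun i hki hi => hagree i (by omega) hi)
    -- sub-claim: any valid u of the right length is equivalent to u.set k 1
    have key : ∀ u : List ℕ, u.length = s.length →
        (∀ i < u.length, u.getD i 0 ∈ Aset i) →
        Relation.EqvGen Rrel u (u.set k 1) := by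
      intro u hulen huval
      have hku : k < u.length := hulen ▸ hkp
      by_cases h1 : u.getD k 0 = 1
      · -- u and u.set k 1 agree from k on; use ih
        apply ih u (u.set k 1) (by simp)
        · exact huval
        · intro i hi
          rw [List.length_set] at hi
          rcases eq_or_ne i k with rfl | hik
          · rw [getD_set_self _ _ hku]; exact one_mem_Aset i
          · rw [getD_set_ne _ _ _ hik]; exact huval i hi
        · intro i hki hi
          rcases eq_or_ne i k with rfl | hik
          · rw [getD_set_self _ _ hku, h1]
          · rw [getD_set_ne _ _ _ hik]
      · -- u k ≠ 1, so k > 0 and u k = Nmap (w ++ [1]) for a valid w of length k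
        have hmem := huval k hku
        rcases Nat.eq_zero_or_pos k with rfl | hk0
        · exact absurd (mem_Aset_zero.mp hmem) h1
        obtain ⟨m, hm⟩ : ∃ m, k = m + 1 := ⟨k - 1, by omega⟩
        rw [hm] at hmem
        rcases mem_Aset_succ.mp hmem with h1' | ⟨w, hwlen, hwval, hwv⟩
        · rw [← hm] at h1'; exact absurd h1' h1
        rw [← hm] at hwlen hwv
        replace hwval : ∀ i < k, w.getD i 0 ∈ Aset i := fun i hi => hwval i (hm ▸ hi)
        -- a := w ++ 1 :: u.drop (k+1)
        set a : List ℕ := w ++ 1 :: u.drop (k + 1) with ha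
        have halen : a.length = u.length := by
          simp [ha, hwlen]; omega
        have hagetD : ∀ i, i < k → a.getD i 0 = w.getD i 0 := by
          intro i hi
          rw [ha, getD_append_left _ _ _ (hwlen ▸ hi)]
        have hagetDk : a.getD k 0 = 1 := by
          rw [ha, getD_append_right _ _ _ (le_of_eq hwlen), hwlen]
          simp
        have hagetD' : ∀ i, k < i → a.getD i 0 = u.getD i 0 := by
          intro i hi
          obtain ⟨j, rfl⟩ : ∃ j, i = k + 1 + j := ⟨i - (k + 1), by omega⟩
          have hwle : w.length ≤ k + 1 + j := by omega
          rw [ha, getD_append_right _ _ _ hwle, hwlen]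
          have h2 : k + 1 + j - k = j + 1 := by omega
          rw [h2, List.getD_cons_succ]
          show (u.drop (k + 1)).getD j 0 = u.getD (k + 1 + j) 0
          simp [List.getD_eq_getElem?_getD, List.getElem?_drop]
        have haval : ∀ i < a.length, a.getD i 0 ∈ Aset i := by
          intro i hi
          rcases lt_trichotomy i k with h | rfl | h
          · rw [hagetD i h]; exact hwval i (hwlen ▸ h)
          · rw [hagetDk]; exact one_mem_Aset i
          · rw [hagetD' i h]; exact huval i (halen ▸ hi)
        have hatake : a.take k = w := by
          apply List.ext_getElem (by simp [ha, hwlen])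
          intro i h1i h2i
          rw [← getD_eq_getElem _ i h1i, ← getD_eq_getElem _ i h2i,
            getD_take _ _ _ (by omega), hagetD i (by omega)]
        have hstep : Rrel a (a.set k (Nmap (a.take k ++ [1]))) :=
          rrel_step a haval k hk0 (by omega) hagetDk
        rw [hatake, ← hwv] at hstep
        set b : List ℕ := a.set k (u.getD k 0) with hb
        -- u ~ b by ih (they agree from k on)
        have hub : Relation.EqvGen Rrel u b := by
          apply ih u b (by simp [hb, halen])
          · exact huval
          · intro i hi
            simp only [hb, List.length_set] at hi
            rcases eq_or_ne i k with rfl | hik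
            · rw [hb, getD_set_self _ _ (halen ▸ hku)]; exact huval i hku
            · rw [hb, getD_set_ne _ _ _ hik]; exact haval i (by simpa using hi)
          · intro i hki hi
            rcases eq_or_ne i k with rfl | hik
            · rw [hb, getD_set_self _ _ (halen ▸ hku)]
            · rw [hb, getD_set_ne _ _ _ hik, hagetD' i (by omega)]
        -- a ~ u.set k 1 by ih
        have hau : Relation.EqvGen Rrel a (u.set k 1) := by
          apply ih a (u.set k 1) (by simp [halen])
          · exact haval
          · intro i hi
            rw [List.length_set] at hi
            rcases eq_or_ne i k with rfl | hik
            · rw [getD_set_self _ _ hku]; exact one_mem_Aset i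
            · rw [getD_set_ne _ _ _ hik]; exact huval i hi
          · intro i hki hi
            rcases eq_or_ne i k with rfl | hik
            · rw [getD_set_self _ _ hku, hagetDk]
            · rw [getD_set_ne _ _ _ hik, hagetD' i (by omega)]
        exact (hub.trans _ _ _ ((Relation.EqvGen.rel _ _ hstep).symm _ _)).trans _ _ _ hau
    -- now use key on s and t and connect via ih
    have hkt : k < t.length := hlen ▸ hkp
    have h1 : Relation.EqvGen Rrel s (s.set k 1) := key s rfl hsval
    have h2 : Relation.EqvGen Rrel t (t.set k 1) := key t hlen.symm htval
    have h3 : Relation.EqvGen Rrel (s.set k 1) (t.set k 1) := by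
      apply ih _ _ (by simp [hlen])
      · intro i hi
        rw [List.length_set] at hi
        rcases eq_or_ne i k with rfl | hik
        · rw [getD_set_self _ _ hkp]; exact one_mem_Aset i
        · rw [getD_set_ne _ _ _ hik]; exact hsval i hi
      · intro i hi
        rw [List.length_set] at hi
        rcases eq_or_ne i k with rfl | hik
        · rw [getD_set_self _ _ hkt]; exact one_mem_Aset i
        · rw [getD_set_ne _ _ _ hik]; exact htval i hi
      · intro i hki hi
        rw [List.length_set] at hi
        rcases eq_or_ne i k with rfl | hik
        · rw [getD_set_self _ _ hkp, getD_set_self _ _ hkt]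
        · rw [getD_set_ne _ _ _ hik, getD_set_ne _ _ _ hik]
          exact hagree i (by omega) hi
    exact (h1.trans _ _ _ h3).trans _ _ _ (h2.symm _ _)


/-- For every `p`, the `ℰ`-equivalence class of `1^p` is exactly
`∏_{n<p} 𝒜_n`, the set of sequences `s` of length `p` with `s i ∈ 𝒜_i`. -/
theorem stmt_15 (p : ℕ) :
    {t | Relation.EqvGen Rrel (List.replicate p 1) t} =
      {s : List ℕ | s.length = p ∧ ∀ i < p, s.getD i 0 ∈ Aset i} := by
  have hrep_len : (List.replicate p (1:ℕ)).length = p := by simp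
  have hrep_val : ∀ i < p, (List.replicate p (1:ℕ)).getD i 0 ∈ Aset i := by
    intro i hi
    rw [getD_eq_getElem _ _ (by simpa using hi)]
    simp [one_mem_Aset]
  ext t
  simp only [Set.mem_setOf_eq]
  constructor
  · intro h
    have main : ∀ x y : List ℕ, Relation.EqvGen Rrel x y →
        ((x.length = p ∧ ∀ i < x.length, x.getD i 0 ∈ Aset i) ↔
         (y.length = p ∧ ∀ i < y.length, y.getD i 0 ∈ Aset i)) := by
      intro x y hxy
      induction hxy with
      | rel a b hab =>
        obtain ⟨hl, ha, hb⟩ := rrel_info hab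
        constructor
        · rintro ⟨hp, -⟩; exact ⟨hl ▸ hp, hb⟩
        · rintro ⟨hp, -⟩; exact ⟨hl.trans hp, ha⟩
      | refl a => rfl
      | symm a b _ ihab => exact ihab.symm
      | trans a b c _ _ ih1 ih2 => exact ih1.trans ih2
    have := (main _ _ h).mp ⟨hrep_len, fun i hi => hrep_val i (by simpa using hi)⟩
    exact ⟨this.1, fun i hi => this.2 i (this.1 ▸ hi)⟩
  · rintro ⟨hlen, hval⟩
    exact Ckey p (List.replicate p 1) t (by simp [hlen]) 
      (fun i hi => hrep_val i (by simpa using hi))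
      (fun i hi => hval i (hlen ▸ hi))
      (fun i hpi hi => by rw [hrep_len] at hi; exact absurd hi (by omega))
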